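/- arXiv:2601.15249 — 2 statements merged into one kernel-verified Lean document; each statement's English description precedes it below -/
import Mathlib

section
/- Let (Ω, μ) be a probability space and let ε : Ω → ℝⁿ be an exchangeable random vector. Let R ∈ ℝⁿ have nonincreasing coordinates (R₁ ≥ ⋯ ≥ R_n), let σ be a permutation of {1,…,n}, and write R^σ for the vector with (R^σ)_i = R_{σ(i)}. Let P : ℝⁿ → ℝⁿ be a map such that for every v ∈ ℝⁿ, P v ∈ K_n and ‖v − P v‖ ≤ ‖v − w‖ for all w ∈ K_n. Let U : ℝⁿ → ℝ be measurable and Schur-convex, and assume ω ↦ U(P(R + ε ω)) and ω ↦ U(P(R^σ + ε ω)) are integrable. Then ∫ U(P(R + ε ω)) dμ(ω) ≥ ∫ U(P(R^σ + ε ω)) dμ(ω): under exchangeable noise, a Schur-convex utility of the isotonically adjusted scores is maximized in expectation by the true ranking. -/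
open MeasureTheory

noncomputable section

/-- The monotone (isotonic) cone of nonincreasing vectors in `ℝⁿ`. -/
def monoCone (n : ℕ) : Set (EuclideanSpace ℝ (Fin n)) :=
  {x | ∀ i j : Fin n, i ≤ j → x j ≤ x i}

/-- `p` is an isotonic projection of `y` onto the monotone cone. -/
def IsIsoProj {n : ℕ} (y p : EuclideanSpace ℝ (Fin n)) : Prop :=
  p ∈ monoCone n ∧ ∀ w ∈ monoCone n, ‖y - p‖ ≤ ‖y - w‖

/-- The sum of the `k` largest entries of `x`. -/
def topKSum {n : ℕ} (x : Fin n → ℝ) (k : ℕ) : ℝ :=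
  sSup ((fun S : Finset (Fin n) => ∑ i ∈ S, x i) '' {S | S.card = k})

/-- `a` majorizes `b`. -/
def Majorizes {n : ℕ} (a b : Fin n → ℝ) : Prop :=
  (∀ k, 1 ≤ k → k ≤ n → topKSum b k ≤ topKSum a k) ∧ ∑ i, a i = ∑ i, b i

/-- A random vector is exchangeable if its law is invariant under coordinate
permutations. -/
def Exchangeable {n : ℕ} {Ω : Type*} [MeasurableSpace Ω] (μ : Measure Ω)
    (ε : Ω → EuclideanSpace ℝ (Fin n)) : Prop :=
  ∀ τ : Equiv.Perm (Fin n),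
    Measure.map (fun ω => (WithLp.toLp 2 (fun i => ε ω (τ i)) : EuclideanSpace ℝ (Fin n))) μ =
      Measure.map ε μ

namespace IsoAux

variable {n : ℕ}

/-- Extend a vector on `Fin n` to `ℕ` by zero. -/
def ext (x : Fin n → ℝ) (m : ℕ) : ℝ := if h : m < n then x ⟨m, h⟩ else 0

/-- Cumulative sum of the first `k` coordinates. -/
def C (x : Fin n → ℝ) (k : ℕ) : ℝ := ∑ i ∈ Finset.range k, ext x i

lemma ext_lt (x : Fin n → ℝ) {m : ℕ} (h : m < n) : ext x m = x ⟨m, h⟩ := dif_pos h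

lemma ext_ge (x : Fin n → ℝ) {m : ℕ} (h : ¬ m < n) : ext x m = 0 := dif_neg h

lemma C_succ (x : Fin n → ℝ) (k : ℕ) : C x (k + 1) = C x k + ext x k := by
  simp [C, Finset.sum_range_succ]

lemma C_n (x : Fin n → ℝ) : C x n = ∑ i, x i := by
  rw [C, ← Fin.sum_univ_eq_sum_range (fun m => ext x m) n]
  exact Finset.sum_congr rfl fun i _ => by rw [ext_lt x i.isLt]

lemma C_eq (x : Fin n → ℝ) {k : ℕ} (hk : k ≤ n) :
    C x k = ∑ j : Fin k, x (Fin.castLE hk j) := by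
  rw [C, ← Fin.sum_univ_eq_sum_range (fun m => ext x m) k]
  exact Finset.sum_congr rfl fun j _ => by rw [ext_lt x (lt_of_lt_of_le j.isLt hk)]; rfl

lemma C_sub (x y : Fin n → ℝ) (k : ℕ) :
    C (fun i => x i - y i) k = C x k - C y k := by
  simp only [C, ← Finset.sum_sub_distrib]
  refine Finset.sum_congr rfl fun m _ => ?_
  unfold ext; split <;> simp

lemma C_add (x y : Fin n → ℝ) (k : ℕ) :
    C (fun i => x i + y i) k = C x k + C y k := by
  simp only [C, ← Finset.sum_add_distrib]
  refine Finset.sum_congr rfl fun m _ => ?_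
  unfold ext; split <;> simp

/-- A sum over any finset is at most the cumulative sum of the same cardinality,
for a nonincreasing vector. -/
lemma sum_subset_le (x : Fin n → ℝ) (hx : ∀ i j : Fin n, i ≤ j → x j ≤ x i)
    (S : Finset (Fin n)) : ∑ i ∈ S, x i ≤ C x S.card := by
  induction S using Finset.strongInductionOn with
  | _ S ih =>
    rcases S.eq_empty_or_nonempty with rfl | hne
    · simp [C]
    · set m := S.max' hne with hm
      have hmem : m ∈ S := S.max'_mem hne
      have hsub : S ⊆ Finset.Iic m := fun i hi => Finset.mem_Iic.2 (S.le_max' i hi)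
      have hcard : S.card ≤ (m : ℕ) + 1 := by
        simpa [Fin.card_Iic] using Finset.card_le_card hsub
      have hpos : 1 ≤ S.card := Finset.card_pos.2 hne
      have hSn : S.card ≤ n := by simpa using S.card_le_univ
      have herase : (S.erase m).card = S.card - 1 := Finset.card_erase_of_mem hmem
      have hkn : (S.erase m).card < n := by omega
      have hek : (⟨(S.erase m).card, hkn⟩ : Fin n) ≤ m := by
        rw [Fin.le_def]; simp only []; omega
      have hxm : x m ≤ x ⟨(S.erase m).card, hkn⟩ := hx _ m hek
      have hih := ih (S.erase m) (Finset.erase_ssubset hmem)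
      have hsplit : ∑ i ∈ S.erase m, x i + x m = ∑ i ∈ S, x i :=
        Finset.sum_erase_add _ _ hmem
      have hcards : S.card = (S.erase m).card + 1 := by omega
      rw [← hsplit, hcards, C_succ, ext_lt x hkn]
      exact add_le_add hih hxm

lemma topKSum_eq (x : Fin n → ℝ) (hx : ∀ i j : Fin n, i ≤ j → x j ≤ x i)
    {k : ℕ} (hk : k ≤ n) : topKSum x k = C x k := by
  refine IsGreatest.csSup_eq ⟨?_, ?_⟩
  · refine ⟨Finset.map (Fin.castLEEmb hk) Finset.univ, ?_, ?_⟩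
    · simp [Set.mem_setOf_eq]
    · show ∑ i ∈ Finset.map (Fin.castLEEmb hk) Finset.univ, x i = C x k
      rw [Finset.sum_map, C_eq x hk]; rfl
  · rintro r ⟨S, hS, rfl⟩
    have h2 : S.card = k := hS
    have := sum_subset_le x hx S
    simpa [h2] using this

/-- Abel summation identity. -/
lemma abel (f g : ℕ → ℝ) (N : ℕ) :
    ∑ k ∈ Finset.range N, f k * g k
      = ∑ k ∈ Finset.range N, (∑ i ∈ Finset.range (k + 1), f i) * (g k - g (k + 1))
        + (∑ i ∈ Finset.range N, f i) * g N := by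
  induction N with
  | zero => simp
  | succ N ih =>
    rw [Finset.sum_range_succ, ih,
      Finset.sum_range_succ (fun k => (∑ i ∈ Finset.range (k + 1), f i) * (g k - g (k + 1))),
      Finset.sum_range_succ f]
    ring

end IsoAux
namespace IsoAux

variable {n : ℕ}

lemma monoCone_convex : Convex ℝ (monoCone n) := by
  intro a ha b hb s t hs ht _ i j hij
  have h1 : (s • a + t • b) j = s * a j + t * b j := rfl
  have h2 : (s • a + t • b) i = s * a i + t * b i := rfl
  rw [h1, h2]
  exact add_le_add (mul_le_mul_of_nonneg_left (ha i j hij) hs)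
    (mul_le_mul_of_nonneg_left (hb i j hij) ht)

set_option maxHeartbeats 1000000 in
lemma inner_proj_le {v q : EuclideanSpace ℝ (Fin n)} (hq : IsIsoProj v q) :
    ∀ w ∈ monoCone n, ∑ i, (v i - q i) * (w i - q i) ≤ 0 := by
  haveI : Nonempty ↑(monoCone n) := ⟨⟨q, hq.1⟩⟩
  have hbdd : BddBelow
      (Set.range (fun w : monoCone n => ‖v - (w : EuclideanSpace ℝ (Fin n))‖)) :=
    ⟨0, fun r hr => by obtain ⟨w, rfl⟩ := hr; exact norm_nonneg _⟩
  have hmin : ‖v - q‖ = ⨅ w : monoCone n, ‖v - (w : EuclideanSpace ℝ (Fin n))‖ :=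
    le_antisymm (le_ciInf fun w => hq.2 w w.2) (ciInf_le hbdd ⟨q, hq.1⟩)
  have h := (norm_eq_iInf_iff_real_inner_le_zero monoCone_convex hq.1).1 hmin
  intro w hw
  have h2 := h w hw
  rw [real_inner_comm] at h2
  simpa [PiLp.inner_apply, RCLike.inner_apply, mul_comm] using h2

lemma inner_q_eq {v q : EuclideanSpace ℝ (Fin n)} (hq : IsIsoProj v q) :
    ∑ i, (v i - q i) * q i = 0 := by
  have h0 : (0 : EuclideanSpace ℝ (Fin n)) ∈ monoCone n := fun i j _ => le_refl 0
  have h2q : (q + q) ∈ monoCone n := fun i j hij =>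
    add_le_add (hq.1 i j hij) (hq.1 i j hij)
  have e1 := inner_proj_le hq 0 h0
  have e2 := inner_proj_le hq (q + q) h2q
  have e1' : -∑ i, (v i - q i) * q i ≤ 0 := by
    rw [← Finset.sum_neg_distrib]
    refine le_trans (le_of_eq (Finset.sum_congr rfl fun i _ => ?_)) e1
    have : (0 : EuclideanSpace ℝ (Fin n)) i = 0 := rfl
    rw [this]; ring
  have e2' : ∑ i, (v i - q i) * q i ≤ 0 := by
    refine le_trans (le_of_eq (Finset.sum_congr rfl fun i _ => ?_)) e2
    have : (q + q) i = q i + q i := rfl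
    rw [this]; ring
  linarith

lemma inner_w_le {v q : EuclideanSpace ℝ (Fin n)} (hq : IsIsoProj v q) :
    ∀ w ∈ monoCone n, ∑ i, (v i - q i) * w i ≤ 0 := by
  intro w hw
  have h := inner_proj_le hq w hw
  have hsplit : ∑ i, (v i - q i) * (w i - q i)
      = ∑ i, (v i - q i) * w i - ∑ i, (v i - q i) * q i := by
    rw [← Finset.sum_sub_distrib]
    exact Finset.sum_congr rfl fun i _ => by ring
  rw [hsplit, inner_q_eq hq] at h
  linarith

/-- The indicator of the first `k` coordinates is in the cone. -/
lemma indicator_mem (k : ℕ) :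
    (WithLp.toLp 2 (fun i : Fin n => if (i : ℕ) < k then (1 : ℝ) else 0) : EuclideanSpace ℝ (Fin n)) ∈ monoCone n := by
  intro i j hij
  show (if (j : ℕ) < k then (1:ℝ) else 0) ≤ (if (i : ℕ) < k then (1:ℝ) else 0)
  by_cases hj : (j : ℕ) < k
  · rw [if_pos hj, if_pos (lt_of_le_of_lt (Fin.le_def.1 hij) hj)]
  · rw [if_neg hj]
    split <;> norm_num

lemma sum_ite_eq_C (x : Fin n → ℝ) {k : ℕ} (hk : k ≤ n) :
    ∑ i : Fin n, (if (i : ℕ) < k then x i else 0) = C x k := by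
  have h1 : ∑ i : Fin n, (if (i : ℕ) < k then x i else 0)
      = ∑ m ∈ Finset.range n, (if m < k then ext x m else 0) := by
    rw [← Fin.sum_univ_eq_sum_range (fun m => if m < k then ext x m else 0) n]
    exact Finset.sum_congr rfl fun i _ => by simp [ext_lt x i.isLt]
  rw [h1, ← Finset.sum_subset (Finset.range_subset_range.2 hk)
      (fun m _ hm => if_neg (by simpa using hm))]
  unfold C
  exact Finset.sum_congr rfl fun m hm => if_pos (Finset.mem_range.1 hm)

lemma C_le_C_proj {v q : EuclideanSpace ℝ (Fin n)} (hq : IsIsoProj v q)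
    {k : ℕ} (hk : k ≤ n) : C v k ≤ C q k := by
  have h : ∑ i : Fin n, (v i - q i) * (if (i : ℕ) < k then (1:ℝ) else 0) ≤ 0 :=
    inner_w_le hq _ (indicator_mem k)
  have : ∑ i : Fin n, (v i - q i) * (if (i : ℕ) < k then (1:ℝ) else 0)
      = C v k - C q k := by
    rw [← C_sub, ← sum_ite_eq_C (fun i => v i - q i) hk]
    exact Finset.sum_congr rfl fun i _ => by split <;> simp
  rw [this] at h
  linarith

lemma sum_proj_eq {v q : EuclideanSpace ℝ (Fin n)} (hq : IsIsoProj v q) :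
    ∑ i, v i = ∑ i, q i := by
  have hone : (WithLp.toLp 2 (fun _ => (1 : ℝ)) : EuclideanSpace ℝ (Fin n)) ∈ monoCone n :=
    fun i j _ => le_refl 1
  have hmone : (WithLp.toLp 2 (fun _ => (-1 : ℝ)) : EuclideanSpace ℝ (Fin n)) ∈ monoCone n :=
    fun i j _ => le_refl _
  have e1 := inner_w_le hq _ hone
  have e2 := inner_w_le hq _ hmone
  simp only [PiLp.toLp_apply, mul_one, mul_neg, Finset.sum_neg_distrib, Finset.sum_sub_distrib] at e1 e2
  linarith

end IsoAux
namespace IsoAux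

variable {n : ℕ}

/-- Complementary slackness: where the cumulative sum of the projection strictly
exceeds that of the data, the projection is flat. -/
lemma flat {v q : EuclideanSpace ℝ (Fin n)} (hq : IsIsoProj v q) {k : ℕ}
    (h1 : 1 ≤ k) (h2 : k < n) (hlt : C v k < C q k) : ext q (k - 1) = ext q k := by
  set a : ℕ → ℝ := fun m => ext v m - ext q m with ha
  have hA : ∀ j, ∑ i ∈ Finset.range j, a i = C v j - C q j := by
    intro j; rw [C, C, ← Finset.sum_sub_distrib]
  have horth : ∑ m ∈ Finset.range n, a m * ext q m = 0 := by
    rw [← Fin.sum_univ_eq_sum_range (fun m => a m * ext q m) n, ← inner_q_eq hq]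
    exact Finset.sum_congr rfl fun i _ => by
      simp [ha, ext_lt v i.isLt, ext_lt q i.isLt]
  have habel := abel a (ext q) n
  have hAn : ∑ i ∈ Finset.range n, a i = 0 := by
    rw [hA n, C_n, C_n, sum_proj_eq hq]; ring
  rw [horth, hAn, zero_mul, add_zero] at habel
  have hsum0 : ∑ j ∈ Finset.range n,
      (∑ i ∈ Finset.range (j + 1), a i) * (ext q j - ext q (j + 1)) = 0 := habel.symm
  have hterm : ∀ j ∈ Finset.range n,
      (∑ i ∈ Finset.range (j + 1), a i) * (ext q j - ext q (j + 1)) ≤ 0 := by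
    intro j hj
    have hjn : j < n := Finset.mem_range.1 hj
    rcases eq_or_lt_of_le (Nat.succ_le_of_lt hjn) with hje | hjlt
    · have hje' : j + 1 = n := hje
      rw [hA (j + 1), hje', C_n, C_n, sum_proj_eq hq, sub_self, zero_mul]
    · have hA1 : (∑ i ∈ Finset.range (j + 1), a i) ≤ 0 := by
        rw [hA]; linarith [C_le_C_proj hq (le_of_lt hjlt)]
      have hmon : ext q (j + 1) ≤ ext q j := by
        rw [ext_lt q hjlt, ext_lt q hjn]
        exact hq.1 ⟨j, hjn⟩ ⟨j + 1, hjlt⟩ (by simp [Fin.le_def])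
      exact mul_nonpos_of_nonpos_of_nonneg hA1 (by linarith)
  have hzero := (Finset.sum_eq_zero_iff_of_nonpos hterm).1 hsum0
  have hk1 : k - 1 ∈ Finset.range n := Finset.mem_range.2 (by omega)
  have hz := hzero _ hk1
  rw [show k - 1 + 1 = k from by omega, hA k] at hz
  have hne : C v k - C q k ≠ 0 := by linarith
  rcases mul_eq_zero.1 hz with h | h
  · exact absurd h hne
  · linarith

/-- The discrete maximum-principle argument. -/
lemma key (n : ℕ) (Qf Pf Zf : ℕ → ℝ)
    (h0 : Qf 0 = Pf 0) (hn : Qf n = Pf n)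
    (hPZ : ∀ k, k ≤ n → Zf k ≤ Pf k)
    (hflat : ∀ k, 1 ≤ k → k < n → Zf k < Qf k → Qf (k + 1) + Qf (k - 1) = 2 * Qf k)
    (hconc : ∀ k, 1 ≤ k → k < n → Pf (k + 1) + Pf (k - 1) ≤ 2 * Pf k) :
    ∀ k, k ≤ n → Qf k ≤ Pf k := by
  by_contra hcon
  push_neg at hcon
  obtain ⟨k₀, hk₀n, hk₀⟩ := hcon
  obtain ⟨m, hmmem, hmmax⟩ := Finset.exists_max_image (Finset.range (n + 1))
    (fun k => Qf k - Pf k) ⟨0, by simp⟩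
  set M := Qf m - Pf m with hM
  have hMpos : 0 < M :=
    lt_of_lt_of_le (by linarith) (hmmax k₀ (Finset.mem_range.2 (by omega)))
  set T := (Finset.range (n + 1)).filter (fun k => M ≤ Qf k - Pf k) with hT
  have hTne : T.Nonempty := ⟨m, Finset.mem_filter.2 ⟨hmmem, le_refl M⟩⟩
  set s := T.min' hTne with hs
  have hsT : s ∈ T := T.min'_mem hTne
  have hsmem : s < n + 1 := Finset.mem_range.1 (Finset.mem_filter.1 hsT).1
  have hsM : M ≤ Qf s - Pf s := (Finset.mem_filter.1 hsT).2
  have hs0 : s ≠ 0 := by intro h; rw [h, h0] at hsM; linarith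
  have hsn : s ≠ n := by intro h; rw [h, hn] at hsM; linarith
  have h1s : 1 ≤ s := by omega
  have hsltn : s < n := by omega
  have hZs : Zf s < Qf s := lt_of_le_of_lt (hPZ s (le_of_lt hsltn)) (by linarith)
  have hlin := hflat s h1s hsltn hZs
  have hcc := hconc s h1s hsltn
  have hup : Qf (s + 1) - Pf (s + 1) ≤ M := hmmax (s + 1) (Finset.mem_range.2 (by omega))
  have hprev : M ≤ Qf (s - 1) - Pf (s - 1) := by linarith
  have hprevmem : s - 1 ∈ T :=
    Finset.mem_filter.2 ⟨Finset.mem_range.2 (by omega), hprev⟩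
  have := T.min'_le _ hprevmem
  omega

/-- Main deterministic lemma: the isotonic projection of the truthfully ranked
scores majorizes that of any permuted ranking. -/
lemma main_maj (R e : EuclideanSpace ℝ (Fin n)) (hR : ∀ i j : Fin n, i ≤ j → R j ≤ R i)
    (σ : Equiv.Perm (Fin n)) (p q : EuclideanSpace ℝ (Fin n))
    (hp : IsIsoProj (R + e) p)
    (hq : IsIsoProj (WithLp.toLp 2 (fun i => R (σ i) + e i) : EuclideanSpace ℝ (Fin n)) q) :
    Majorizes p q := by
  set y : EuclideanSpace ℝ (Fin n) := R + e with hy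
  set z : EuclideanSpace ℝ (Fin n) := WithLp.toLp 2 (fun i => R (σ i) + e i) with hz
  have hysum : ∑ i, y i = ∑ i, R i + ∑ i, e i := by
    rw [← Finset.sum_add_distrib]; try rfl
  have hzsum : ∑ i, z i = ∑ i, R i + ∑ i, e i := by
    rw [← Equiv.sum_comp σ R, ← Finset.sum_add_distrib]; try rfl
  have hsumz : ∑ i, z i = ∑ i, y i := by rw [hysum, hzsum]
  have hCz : ∀ k, k ≤ n → C z k ≤ C y k := by
    intro k hk
    have h1 : C z k = C (fun i => R (σ i)) k + C e k := by rw [← C_add]; try rfl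
    have h2 : C y k = C R k + C e k := by rw [← C_add]; try rfl
    have hinj : Function.Injective (fun j : Fin k => σ (Fin.castLE hk j)) :=
      σ.injective.comp (Fin.castLE_injective hk)
    have himg : ∑ j : Fin k, R (σ (Fin.castLE hk j))
        = ∑ i ∈ Finset.univ.image (fun j : Fin k => σ (Fin.castLE hk j)), R i :=
      (Finset.sum_image (fun a _ b _ h => hinj h)).symm
    have hcard : (Finset.univ.image (fun j : Fin k => σ (Fin.castLE hk j))).card = k := by
      rw [Finset.card_image_of_injective _ hinj, Finset.card_univ, Fintype.card_fin]
    have h3 : C (fun i => R (σ i)) k ≤ C R k := by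
      rw [C_eq _ hk, himg]
      have h4 := sum_subset_le R hR
        (Finset.univ.image (fun j : Fin k => σ (Fin.castLE hk j)))
      rwa [hcard] at h4
    linarith
  have hflatq : ∀ k, 1 ≤ k → k < n → C z k < C q k →
      C q (k + 1) + C q (k - 1) = 2 * C q k := by
    intro k h1 h2 hlt
    have hf := flat hq h1 h2 hlt
    have e1 : C q (k + 1) = C q k + ext q k := C_succ q k
    have e2 : C q k = C q (k - 1) + ext q (k - 1) := by
      conv_lhs => rw [show k = (k - 1) + 1 from by omega]
      exact C_succ q (k - 1)
    rw [e1, e2, hf]; ring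
  have hconcp : ∀ k, 1 ≤ k → k < n → C p (k + 1) + C p (k - 1) ≤ 2 * C p k := by
    intro k h1 h2
    have e1 : C p (k + 1) = C p k + ext p k := C_succ p k
    have e2 : C p k = C p (k - 1) + ext p (k - 1) := by
      conv_lhs => rw [show k = (k - 1) + 1 from by omega]
      exact C_succ p (k - 1)
    have hmon : ext p k ≤ ext p (k - 1) := by
      rw [ext_lt p h2, ext_lt p (show k - 1 < n by omega)]
      exact hp.1 ⟨k - 1, by omega⟩ ⟨k, h2⟩ (by simp only [Fin.le_def]; omega)
    rw [e1]; linarith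
  have hsump : ∑ i, p i = ∑ i, y i := (sum_proj_eq hp).symm
  have hsumq : ∑ i, q i = ∑ i, z i := (sum_proj_eq hq).symm
  have h0 : C q 0 = C p 0 := by simp [C]
  have hnn : C q n = C p n := by rw [C_n, C_n, hsump, hsumq, hsumz]
  have hPZ : ∀ k, k ≤ n → C z k ≤ C p k :=
    fun k hk => le_trans (hCz k hk) (C_le_C_proj hp hk)
  have hkey := key n (C q) (C p) (C z) h0 hnn hPZ
    (fun k h1 h2 hlt => hflatq k h1 h2 hlt) hconcp
  refine ⟨fun k hk1 hkn => ?_, by rw [hsump, hsumq, hsumz]⟩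
  rw [topKSum_eq p hp.1 hkn, topKSum_eq q hq.1 hkn]
  exact hkey k hkn

end IsoAux

/-- Under exchangeable noise, a Schur-convex utility of the isotonically adjusted
scores is maximized in expectation by the true ranking. -/
theorem truthful_ranking_maximizes_schur_convex_utility
    {n : ℕ} {Ω : Type*} [MeasurableSpace Ω]
    (μ : Measure Ω) [IsProbabilityMeasure μ]
    (ε : Ω → EuclideanSpace ℝ (Fin n)) (hε : Exchangeable μ ε)
    (R : EuclideanSpace ℝ (Fin n)) (hR : ∀ i j : Fin n, i ≤ j → R j ≤ R i)
    (σ : Equiv.Perm (Fin n))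
    (P : EuclideanSpace ℝ (Fin n) → EuclideanSpace ℝ (Fin n))
    (hP : ∀ v, IsIsoProj v (P v))
    (U : EuclideanSpace ℝ (Fin n) → ℝ) (hUmeas : Measurable U)
    (hUschur : ∀ a b : Fin n → ℝ, Majorizes a b → U (WithLp.toLp 2 b) ≤ U (WithLp.toLp 2 a))
    (hint_true : Integrable (fun ω => U (P (R + ε ω))) μ)
    (hint_perm : Integrable
      (fun ω => U (P (WithLp.toLp 2 (fun i => R (σ i) + ε ω i) : EuclideanSpace ℝ (Fin n)))) μ) :
    ∫ ω, U (P (WithLp.toLp 2 (fun i => R (σ i) + ε ω i) : EuclideanSpace ℝ (Fin n))) ∂μ ≤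
      ∫ ω, U (P (R + ε ω)) ∂μ := by
  refine integral_mono hint_perm hint_true fun ω => ?_
  exact hUschur _ _ (IsoAux.main_maj R (ε ω) hR σ _ _ (hP _) (hP _))
end
end

section
/- Let (Ω, μ) be a probability space and let ε : Ω → ℝⁿ be an exchangeable random vector. Let R ∈ ℝⁿ have nonincreasing coordinates (R₁ ≥ ⋯ ≥ R_n), let σ be a permutation of {1,…,n}, and write R^σ for the vector with (R^σ)_i = R_{σ(i)}. Let P : ℝⁿ → ℝⁿ be a map such that for every v ∈ ℝⁿ, P v ∈ K_n and ‖v − P v‖ ≤ ‖v − w‖ for all w ∈ K_n. Let U : ℝ → ℝ be nondecreasing (convexity is NOT assumed), and assume the integrands below are integrable. Then ∫ U((P(R + ε ω)) 1) dμ(ω) ≥ ∫ U((P(R^σ + ε ω)) 1) dμ(ω): with quota one, truthful ranking maximizes the expected utility of the top adjusted score for any nondecreasing utility. -/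
open MeasureTheory

noncomputable section

open Finset
open scoped RealInnerProductSpace

lemma monoCone_convex (n : ℕ) : Convex ℝ (monoCone n) := by
  intro x hx y hy a b ha hb _ i j hij
  have hx' := hx i j hij
  have hy' := hy i j hij
  show a * x j + b * y j ≤ a * x i + b * y i
  exact add_le_add (mul_le_mul_of_nonneg_left hx' ha) (mul_le_mul_of_nonneg_left hy' hb)

lemma isoProj_inner_le {n : ℕ} {y p : EuclideanSpace ℝ (Fin n)}
    (h : IsIsoProj y p) : ∀ w ∈ monoCone n, ⟪y - p, w - p⟫ ≤ 0 := by
  haveI : Nonempty ↥(monoCone n) := ⟨⟨p, h.1⟩⟩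
  have hinf : ‖y - p‖ = ⨅ w : monoCone n, ‖y - w‖ := by
    refine le_antisymm (le_ciInf fun w => h.2 w.1 w.2) ?_
    exact ciInf_le ⟨0, by rintro x ⟨w, rfl⟩; exact norm_nonneg _⟩ (⟨p, h.1⟩ : monoCone n)
  exact (norm_eq_iInf_iff_real_inner_le_zero (monoCone_convex n) h.1).mp hinf

/-- The prefix indicator vector. -/
def preInd (n k : ℕ) : EuclideanSpace ℝ (Fin n) :=
  WithLp.toLp 2 (fun i => if (i : ℕ) < k then 1 else 0)

lemma preInd_mem (n k : ℕ) : preInd n k ∈ monoCone n := by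
  intro i j hij
  unfold preInd
  by_cases hj : (j : ℕ) < k
  · have : (i : ℕ) < k := lt_of_le_of_lt hij hj
    simp [this, hj]
  · by_cases hi : (i : ℕ) < k <;> simp [hi, hj]

lemma inner_preInd {n k : ℕ} (v : EuclideanSpace ℝ (Fin n)) :
    ⟪v, preInd n k⟫ = ∑ i ∈ univ.filter (fun i : Fin n => (i : ℕ) < k), v i := by
  rw [PiLp.inner_apply, Finset.sum_filter]
  refine Finset.sum_congr rfl fun i _ => ?_
  unfold preInd
  by_cases hi : (i : ℕ) < k <;> simp [hi]

lemma card_prefix {n k : ℕ} (hk : k ≤ n) :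
    (univ.filter fun i : Fin n => (i : ℕ) < k).card = k := by
  have heq : (univ.filter fun i : Fin n => (i : ℕ) < k)
      = Finset.attachFin (Finset.range k)
        (fun m hm => (Finset.mem_range.mp hm).trans_le hk) := by
    ext i; simp [Finset.mem_attachFin]
  rw [heq, Finset.card_attachFin, Finset.card_range]

/-- Prefix sums of `y` are bounded by `k` times the top coordinate of the projection. -/
lemma sum_prefix_le {n : ℕ} (hn : 0 < n) {y p : EuclideanSpace ℝ (Fin n)}
    (h : IsIsoProj y p) (k : ℕ) (hk : k ≤ n) :
    ∑ i ∈ univ.filter (fun i : Fin n => (i : ℕ) < k), y i ≤ k * p ⟨0, hn⟩ := by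
  classical
  have hcone : p + preInd n k ∈ monoCone n := by
    intro i j hij
    show p j + preInd n k j ≤ p i + preInd n k i
    exact add_le_add (h.1 i j hij) (preInd_mem n k i j hij)
  have hv := isoProj_inner_le h _ hcone
  rw [add_sub_cancel_left, inner_preInd] at hv
  have hsum : ∑ i ∈ univ.filter (fun i : Fin n => (i : ℕ) < k), (y - p) i
      = ∑ i ∈ univ.filter (fun i : Fin n => (i : ℕ) < k), (y i - p i) := rfl
  rw [hsum, Finset.sum_sub_distrib, sub_nonpos] at hv
  refine hv.trans ?_
  have hcard : ∀ i ∈ univ.filter (fun i : Fin n => (i : ℕ) < k), p i ≤ p ⟨0, hn⟩ := by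
    intro i _
    exact h.1 ⟨0, hn⟩ i (by simp [Fin.le_def])
  calc ∑ i ∈ univ.filter (fun i : Fin n => (i : ℕ) < k), p i
      ≤ ∑ _i ∈ univ.filter (fun i : Fin n => (i : ℕ) < k), p ⟨0, hn⟩ :=
        Finset.sum_le_sum hcard
    _ = k * p ⟨0, hn⟩ := by
        rw [Finset.sum_const, nsmul_eq_mul, card_prefix hk]

/-- For the first constant block, the prefix sum dominates `k` times the top value. -/
lemma exists_prefix_ge {n : ℕ} (hn : 0 < n) {y p : EuclideanSpace ℝ (Fin n)}
    (h : IsIsoProj y p) :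
    ∃ k : ℕ, 1 ≤ k ∧ k ≤ n ∧
      (k : ℝ) * p ⟨0, hn⟩ ≤ ∑ i ∈ univ.filter (fun i : Fin n => (i : ℕ) < k), y i := by
  classical
  set i0 : Fin n := ⟨0, hn⟩ with hi0
  set T : Finset (Fin n) := univ.filter (fun i => p i < p i0) with hT
  -- the block length k and the perturbation size t
  set k : ℕ := if hne : T.Nonempty then (T.min' hne : ℕ) else n with hkdef
  set t : ℝ := if hne : T.Nonempty then p i0 - p (T.min' hne) else 1 with htdef
  have ht : 0 < t := by
    rw [htdef]
    split_ifs with hne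
    · have := (Finset.mem_filter.mp (T.min'_mem hne)).2
      linarith
    · norm_num
  have hk1 : 1 ≤ k := by
    rw [hkdef]
    split_ifs with hne
    · by_contra hlt
      have h0 : ((T.min' hne : Fin n) : ℕ) = 0 := by omega
      have : T.min' hne = i0 := by
        apply Fin.ext; simpa using h0
      have hlt' := (Finset.mem_filter.mp (T.min'_mem hne)).2
      rw [this] at hlt'
      exact lt_irrefl _ hlt'
    · exact hn
  have hkn : k ≤ n := by
    rw [hkdef]; split_ifs with hne
    · exact le_of_lt (Fin.is_lt _)
    · exact le_rfl
  -- the constant block: p i = p i0 for i.val < k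
  have hblock : ∀ i : Fin n, (i : ℕ) < k → p i = p i0 := by
    intro i hik
    have hle : p i ≤ p i0 := h.1 i0 i (by simp [hi0, Fin.le_def])
    rcases lt_or_eq_of_le hle with hlt | heq
    · exfalso
      have hiT : i ∈ T := Finset.mem_filter.mpr ⟨Finset.mem_univ _, hlt⟩
      have hne : T.Nonempty := ⟨i, hiT⟩
      have := T.min'_le i hiT
      rw [hkdef] at hik
      simp only [dif_pos hne] at hik
      have : ((T.min' hne : Fin n) : ℕ) ≤ (i : ℕ) := this
      omega
    · exact heq
  -- the perturbed vector is in the cone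
  have hcone : p - t • preInd n k ∈ monoCone n := by
    intro i j hij
    show p j - t * preInd n k j ≤ p i - t * preInd n k i
    unfold preInd
    by_cases hjk : (j : ℕ) < k
    · have hik : (i : ℕ) < k := lt_of_le_of_lt hij hjk
      simp only [WithLp.ofLp_toLp, if_pos hjk, if_pos hik]
      rw [hblock i hik, hblock j hjk]
    · by_cases hik : (i : ℕ) < k
      · simp only [WithLp.ofLp_toLp, if_neg hjk, if_pos hik, mul_one, mul_zero, sub_zero]
        rw [hblock i hik]
        -- need p j ≤ p i0 - t
        have hne : T.Nonempty := by
          by_contra hne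
          rw [hkdef] at hjk
          simp only [dif_neg hne] at hjk
          exact hjk (Fin.is_lt j)
        have hmin : T.min' hne ≤ j := by
          rw [Fin.le_def]
          rw [hkdef] at hjk
          simp only [dif_pos hne] at hjk
          omega
        have := h.1 _ _ hmin
        rw [htdef]
        simp only [dif_pos hne]
        linarith
      · simp only [WithLp.ofLp_toLp, if_neg hjk, if_neg hik, mul_zero, sub_zero]
        exact h.1 i j hij
  -- variational inequality in the inward direction
  have hv := isoProj_inner_le h _ hcone
  rw [sub_sub_cancel_left, inner_neg_right, inner_smul_right, inner_preInd] at hv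
  have hv' : 0 ≤ ∑ i ∈ univ.filter (fun i : Fin n => (i : ℕ) < k), (y - p) i := by
    nlinarith
  refine ⟨k, hk1, hkn, ?_⟩
  have hsum : ∑ i ∈ univ.filter (fun i : Fin n => (i : ℕ) < k), (y - p) i
      = ∑ i ∈ univ.filter (fun i : Fin n => (i : ℕ) < k), (y i - p i) := rfl
  rw [hsum, Finset.sum_sub_distrib, sub_nonneg] at hv'
  refine le_trans ?_ hv'
  have : ∑ i ∈ univ.filter (fun i : Fin n => (i : ℕ) < k), p i
      = ∑ i ∈ univ.filter (fun i : Fin n => (i : ℕ) < k), p i0 :=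
    Finset.sum_congr rfl fun i hi => hblock i (Finset.mem_filter.mp hi).2
  rw [this, Finset.sum_const, nsmul_eq_mul, card_prefix hkn]

lemma top_coord_le {n : ℕ} (hn : 0 < n) {y y' p p' : EuclideanSpace ℝ (Fin n)}
    (h : IsIsoProj y p) (h' : IsIsoProj y' p')
    (hpre : ∀ k : ℕ, k ≤ n → ∑ i ∈ univ.filter (fun i : Fin n => (i : ℕ) < k), y' i
        ≤ ∑ i ∈ univ.filter (fun i : Fin n => (i : ℕ) < k), y i) :
    p' ⟨0, hn⟩ ≤ p ⟨0, hn⟩ := by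
  obtain ⟨k, hk1, hkn, hB⟩ := exists_prefix_ge hn h'
  have hA := sum_prefix_le hn h k hkn
  have hkpos : (0 : ℝ) < k := by exact_mod_cast hk1
  exact le_of_mul_le_mul_left (hB.trans ((hpre k hkn).trans hA)) hkpos

lemma strictMono_val_le {k n : ℕ} (f : Fin k → Fin n) (hf : StrictMono f) :
    ∀ j : Fin k, (j : ℕ) ≤ (f j : ℕ) := by
  have H : ∀ m : ℕ, ∀ hm : m < k, m ≤ (f ⟨m, hm⟩ : ℕ) := by
    intro m
    induction m with
    | zero => intro _; exact Nat.zero_le _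
    | succ m ih =>
      intro hm
      have hm' : m < k := Nat.lt_of_succ_lt hm
      have h1 := ih hm'
      have h2 : f ⟨m, hm'⟩ < f ⟨m + 1, hm⟩ := hf (by simp [Fin.lt_def])
      have h3 : (f ⟨m, hm'⟩ : ℕ) < (f ⟨m + 1, hm⟩ : ℕ) := h2
      omega
  intro j; exact H j.1 j.2

lemma sum_perm_prefix {n k : ℕ} (hk : k ≤ n) (R : Fin n → ℝ)
    (hR : ∀ i j : Fin n, i ≤ j → R j ≤ R i) (σ : Equiv.Perm (Fin n)) :
    ∑ i ∈ univ.filter (fun i : Fin n => (i : ℕ) < k), R (σ i)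
      ≤ ∑ i ∈ univ.filter (fun i : Fin n => (i : ℕ) < k), R i := by
  classical
  set F : Finset (Fin n) := univ.filter (fun i : Fin n => (i : ℕ) < k) with hF
  set S : Finset (Fin n) := F.image σ with hS
  have hSk : S.card = k := by
    rw [hS, Finset.card_image_of_injective _ σ.injective, hF, card_prefix hk]
  set e := S.orderEmbOfFin hSk with he
  -- LHS as a sum over S
  have hL : ∑ i ∈ F, R (σ i) = ∑ i ∈ S, R i := by
    rw [hS, Finset.sum_image (fun a _ b _ hab => σ.injective hab)]
  -- S as the image of e
  have hSimg : S = Finset.univ.image (fun j => e j) := by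
    ext i
    have hr := Finset.range_orderEmbOfFin S hSk
    constructor
    · intro hi
      have : i ∈ Set.range e := by rw [hr]; exact hi
      obtain ⟨j, hj⟩ := this
      exact Finset.mem_image.mpr ⟨j, Finset.mem_univ _, hj⟩
    · intro hi
      obtain ⟨j, _, hj⟩ := Finset.mem_image.mp hi
      have : i ∈ Set.range e := ⟨j, hj⟩
      rwa [hr] at this
  have hL2 : ∑ i ∈ S, R i = ∑ j : Fin k, R (e j) := by
    rw [hSimg, Finset.sum_image (fun a _ b _ hab => e.injective hab)]
  -- RHS as a sum over Fin k
  have hR2 : ∑ i ∈ F, R i = ∑ j : Fin k, R ⟨j, lt_of_lt_of_le j.2 hk⟩ := by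
    refine Finset.sum_bij'
      (fun i hi => (⟨(i : ℕ), (Finset.mem_filter.mp hi).2⟩ : Fin k))
      (fun j _ => (⟨(j : ℕ), lt_of_lt_of_le j.2 hk⟩ : Fin n))
      (fun a ha => Finset.mem_univ _)
      (fun j _ => Finset.mem_filter.mpr ⟨Finset.mem_univ _, j.2⟩)
      (fun a ha => rfl) (fun j _ => rfl) (fun a ha => rfl)
  rw [hL, hL2, hR2]
  refine Finset.sum_le_sum fun j _ => ?_
  refine hR _ _ ?_
  rw [Fin.le_def]
  exact strictMono_val_le (fun j => e j) e.strictMono j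

/-- With quota one, truthful ranking maximizes the expected utility of the top
adjusted score for any nondecreasing utility (convexity is not assumed). -/
theorem quota_one_truthfulness_nondecreasing_utility
    {n : ℕ} (hn : 0 < n) {Ω : Type*} [MeasurableSpace Ω]
    (μ : Measure Ω) [IsProbabilityMeasure μ]
    (ε : Ω → EuclideanSpace ℝ (Fin n)) (hε : Exchangeable μ ε)
    (R : EuclideanSpace ℝ (Fin n)) (hR : ∀ i j : Fin n, i ≤ j → R j ≤ R i)
    (σ : Equiv.Perm (Fin n))
    (P : EuclideanSpace ℝ (Fin n) → EuclideanSpace ℝ (Fin n))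
    (hP : ∀ v, IsIsoProj v (P v))
    (U : ℝ → ℝ) (hU : Monotone U)
    (hint_true : Integrable (fun ω => U (P (R + ε ω) ⟨0, hn⟩)) μ)
    (hint_perm : Integrable (fun ω =>
      U (P (WithLp.toLp 2 (fun i => R (σ i) + ε ω i) : EuclideanSpace ℝ (Fin n)) ⟨0, hn⟩)) μ) :
    ∫ ω, U (P (WithLp.toLp 2 (fun i => R (σ i) + ε ω i) : EuclideanSpace ℝ (Fin n)) ⟨0, hn⟩) ∂μ ≤
      ∫ ω, U (P (R + ε ω) ⟨0, hn⟩) ∂μ := by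
  refine integral_mono hint_perm hint_true fun ω => ?_
  refine hU ?_
  refine top_coord_le hn (hP (R + ε ω)) (hP _) fun k hk => ?_
  have h1 : ∑ i ∈ univ.filter (fun i : Fin n => (i : ℕ) < k),
      ((WithLp.toLp 2 (fun i => R (σ i) + ε ω i) : EuclideanSpace ℝ (Fin n)) i)
      = (∑ i ∈ univ.filter (fun i : Fin n => (i : ℕ) < k), R (σ i))
        + ∑ i ∈ univ.filter (fun i : Fin n => (i : ℕ) < k), ε ω i := by
    simp only [WithLp.ofLp_toLp]
    rw [← Finset.sum_add_distrib]
  have h2 : ∑ i ∈ univ.filter (fun i : Fin n => (i : ℕ) < k), (R + ε ω) i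
      = (∑ i ∈ univ.filter (fun i : Fin n => (i : ℕ) < k), R i)
        + ∑ i ∈ univ.filter (fun i : Fin n => (i : ℕ) < k), ε ω i := by
    rw [← Finset.sum_add_distrib]; rfl
  rw [h1, h2]
  exact add_le_add_left (sum_perm_prefix hk R hR σ) _
end
end
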